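/- Let q ∈ ℂ with q ≠ 0, and let K₁, K₂, X₁⁺, X₁⁻, X₂⁺, X₂⁻ be the explicit 7×7 complex matrices defined in the context. Then these matrices satisfy the defining relations of the quantized universal enveloping algebra U_q(g₂) (with Cartan integers a₁₁ = a₂₂ = 2, a₁₂ = −1, a₂₁ = −3 and q₁ = q³, q₂ = q), in denominator-free form: K₁K₂ = K₂K₁; K₁ and K₂ are invertible; K₁X₁^±K₁⁻¹ = q^{±6}X₁^±; K₁X₂^±K₁⁻¹ = q^{∓3}X₂^±; K₂X₁^±K₂⁻¹ = q^{∓3}X₁^±; K₂X₂^±K₂⁻¹ = q^{±2}X₂^±; X₁⁺X₂⁻ = X₂⁻X₁⁺; X₂⁺X₁⁻ = X₁⁻X₂⁺; (q³−q⁻³)(X₁⁺X₁⁻ − X₁⁻X₁⁺) = K₁ − K₁⁻¹; (q−q⁻¹)(X₂⁺X₂⁻ − X₂⁻X₂⁺) = K₂ − K₂⁻¹; the q-Serre relations (X₁^±)²X₂^± − (q³+q⁻³)X₁^±X₂^±X₁^± + X₂^±(X₁^±)² = 0 and (X₂^±)⁴X₁^± − [4](X₂^±)³X₁^±X₂^±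 + [4;2](X₂^±)²X₁^±(X₂^±)² − [4]X₂^±X₁^±(X₂^±)³ + X₁^±(X₂^±)⁴ = 0, where [4] := q³+q+q⁻¹+q⁻³ and [4;2] := q⁴+q²+2+q⁻²+q⁻⁴. -/

import Mathlib

section Stmt18Aux

lemma stmt18_e_mul (a b c d : Fin 7) :
    Matrix.single a b (1:ℂ) * Matrix.single c d (1:ℂ) =
      if b = c then Matrix.single a d (1:ℂ) else 0 := by
  split
  · next h => subst h; rw [Matrix.single_mul_single_same, one_mul]
  · next h => exact Matrix.single_mul_single_of_ne 1 a b c h 1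

lemma stmt18_diag_mul_e (v : Fin 7 → ℂ) (a b : Fin 7) :
    Matrix.diagonal v * Matrix.single a b (1:ℂ) = v a • Matrix.single a b 1 := by
  ext i j
  rw [Matrix.diagonal_mul, Matrix.smul_apply]
  by_cases h : i = a
  · subst h; rfl
  · simp [Matrix.single, Ne.symm h]

lemma stmt18_e_mul_diag (v : Fin 7 → ℂ) (a b : Fin 7) :
    Matrix.single a b (1:ℂ) * Matrix.diagonal v = v b • Matrix.single a b 1 := by
  ext i j
  rw [Matrix.mul_diagonal, Matrix.smul_apply]
  by_cases h : j = b
  · subst h; rw [mul_comm]; rfl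
  · simp [Matrix.single, Ne.symm h]

lemma stmt18_vec0 (a b c d f g h : ℂ) : ![a,b,c,d,f,g,h] (0 : Fin 7) = a := rfl
lemma stmt18_vec1 (a b c d f g h : ℂ) : ![a,b,c,d,f,g,h] (1 : Fin 7) = b := rfl
lemma stmt18_vec2 (a b c d f g h : ℂ) : ![a,b,c,d,f,g,h] (2 : Fin 7) = c := rfl
lemma stmt18_vec3 (a b c d f g h : ℂ) : ![a,b,c,d,f,g,h] (3 : Fin 7) = d := rfl
lemma stmt18_vec4 (a b c d f g h : ℂ) : ![a,b,c,d,f,g,h] (4 : Fin 7) = f := rfl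
lemma stmt18_vec5 (a b c d f g h : ℂ) : ![a,b,c,d,f,g,h] (5 : Fin 7) = g := rfl
lemma stmt18_vec6 (a b c d f g h : ℂ) : ![a,b,c,d,f,g,h] (6 : Fin 7) = h := rfl

lemma stmt18_diag_single (i : Fin 7) (c : ℂ) :
    Matrix.diagonal (Pi.single i c) = Matrix.single i i c := by
  ext a b
  by_cases h : i = a <;> by_cases h' : a = b <;>
    simp [Matrix.diagonal_apply, Pi.single_apply, Matrix.single, *] <;>
    simp [← h', h] <;> tauto

lemma stmt18_diag_to_e (a b c d f g h : ℂ) :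
    Matrix.diagonal ![a,b,c,d,f,g,h] =
      a • Matrix.single 0 0 (1:ℂ) + b • Matrix.single 1 1 1
      + c • Matrix.single 2 2 1 + d • Matrix.single 3 3 1
      + f • Matrix.single 4 4 1 + g • Matrix.single 5 5 1
      + h • Matrix.single 6 6 1 := by
  simp only [Matrix.smul_single, smul_eq_mul, mul_one]
  simp only [← stmt18_diag_single, Matrix.diagonal_add]
  refine congrArg Matrix.diagonal ?_
  funext i
  fin_cases i <;> simp (config := { decide := true }) [Pi.single_apply] <;> rfl

noncomputable def stmt18K1 (q : ℂ) : Matrix (Fin 7) (Fin 7) ℂ :=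
  Matrix.diagonal ![1, q ^ 3, (q ^ 3)⁻¹, 1, q ^ 3, (q ^ 3)⁻¹, 1]
noncomputable def stmt18D1 (q : ℂ) : Matrix (Fin 7) (Fin 7) ℂ :=
  Matrix.diagonal ![1, (q ^ 3)⁻¹, q ^ 3, 1, (q ^ 3)⁻¹, q ^ 3, 1]
noncomputable def stmt18K2 (q : ℂ) : Matrix (Fin 7) (Fin 7) ℂ :=
  Matrix.diagonal ![q, q⁻¹, q ^ 2, 1, (q ^ 2)⁻¹, q, q⁻¹]
noncomputable def stmt18D2 (q : ℂ) : Matrix (Fin 7) (Fin 7) ℂ :=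
  Matrix.diagonal ![q⁻¹, q, (q ^ 2)⁻¹, 1, q ^ 2, q⁻¹, q]
noncomputable def stmt18x1p : Matrix (Fin 7) (Fin 7) ℂ :=
  Matrix.single 1 2 1 + Matrix.single 4 5 1
noncomputable def stmt18x1m : Matrix (Fin 7) (Fin 7) ℂ :=
  Matrix.single 2 1 1 + Matrix.single 5 4 1
noncomputable def stmt18x2p (q : ℂ) : Matrix (Fin 7) (Fin 7) ℂ :=
  Matrix.single 0 1 1 + (q + q⁻¹) • Matrix.single 2 3 1
    + Matrix.single 3 4 1 + Matrix.single 5 6 1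
noncomputable def stmt18x2m (q : ℂ) : Matrix (Fin 7) (Fin 7) ℂ :=
  Matrix.single 1 0 1 + Matrix.single 3 2 1
    + (q + q⁻¹) • Matrix.single 4 3 1 + Matrix.single 6 5 1

lemma stmt18_inv1mul (q : ℂ) (hq : q ≠ 0) : stmt18K1 q * stmt18D1 q = 1 := by
  unfold stmt18K1 stmt18D1
  rw [Matrix.diagonal_mul_diagonal, ← Matrix.diagonal_one]
  refine congrArg Matrix.diagonal ?_
  funext i
  fin_cases i <;>
    simp [stmt18_vec0, stmt18_vec1, stmt18_vec2, stmt18_vec3, stmt18_vec4, stmt18_vec5,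
      stmt18_vec6] <;>
    field_simp

lemma stmt18_inv2mul (q : ℂ) (hq : q ≠ 0) : stmt18K2 q * stmt18D2 q = 1 := by
  unfold stmt18K2 stmt18D2
  rw [Matrix.diagonal_mul_diagonal, ← Matrix.diagonal_one]
  refine congrArg Matrix.diagonal ?_
  funext i
  fin_cases i <;>
    simp [stmt18_vec0, stmt18_vec1, stmt18_vec2, stmt18_vec3, stmt18_vec4, stmt18_vec5,
      stmt18_vec6] <;>
    field_simp

lemma stmt18_inv1L (q : ℂ) (hq : q ≠ 0) :
    (Matrix.diagonal ![1, q ^ 3, (q ^ 3)⁻¹, 1, q ^ 3, (q ^ 3)⁻¹, 1])⁻¹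
      = Matrix.diagonal ![1, (q ^ 3)⁻¹, q ^ 3, 1, (q ^ 3)⁻¹, q ^ 3, 1] :=
  Matrix.inv_eq_right_inv (stmt18_inv1mul q hq)

lemma stmt18_inv2L (q : ℂ) (hq : q ≠ 0) :
    (Matrix.diagonal ![q, q⁻¹, q ^ 2, 1, (q ^ 2)⁻¹, q, q⁻¹])⁻¹
      = Matrix.diagonal ![q⁻¹, q, (q ^ 2)⁻¹, 1, q ^ 2, q⁻¹, q] :=
  Matrix.inv_eq_right_inv (stmt18_inv2mul q hq)

-- 1
lemma stmt18_r1 (q : ℂ) : stmt18K1 q * stmt18K2 q = stmt18K2 q * stmt18K1 q := by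
  unfold stmt18K1 stmt18K2
  rw [Matrix.diagonal_mul_diagonal, Matrix.diagonal_mul_diagonal]
  refine congrArg Matrix.diagonal ?_
  funext i
  exact mul_comm _ _

-- conjugation relations (right inverse already substituted)
lemma stmt18_r4 (q : ℂ) :
    stmt18K1 q * stmt18x1p * stmt18D1 q = (q ^ 6) • stmt18x1p := by
  unfold stmt18K1 stmt18D1 stmt18x1p
  simp [stmt18_e_mul, stmt18_diag_mul_e, stmt18_e_mul_diag, mul_add, add_mul, smul_add, smul_sub, sub_smul, smul_smul, smul_mul_assoc, mul_smul_comm, -Matrix.smul_single, stmt18_vec0, stmt18_vec1, stmt18_vec2, stmt18_vec3, stmt18_vec4, stmt18_vec5, stmt18_vec6]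
  module

lemma stmt18_r5 (q : ℂ) :
    stmt18K1 q * stmt18x1m * stmt18D1 q = (q ^ 6)⁻¹ • stmt18x1m := by
  unfold stmt18K1 stmt18D1 stmt18x1m
  simp [stmt18_e_mul, stmt18_diag_mul_e, stmt18_e_mul_diag, mul_add, add_mul, smul_add, smul_sub, sub_smul, smul_smul, smul_mul_assoc, mul_smul_comm, -Matrix.smul_single, stmt18_vec0, stmt18_vec1, stmt18_vec2, stmt18_vec3, stmt18_vec4, stmt18_vec5, stmt18_vec6]
  module

lemma stmt18_r6 (q : ℂ) :
    stmt18K1 q * stmt18x2p q * stmt18D1 q = (q ^ 3)⁻¹ • stmt18x2p q := by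
  unfold stmt18K1 stmt18D1 stmt18x2p
  simp [stmt18_e_mul, stmt18_diag_mul_e, stmt18_e_mul_diag, mul_add, add_mul, smul_add, smul_sub, sub_smul, smul_smul, smul_mul_assoc, mul_smul_comm, -Matrix.smul_single, stmt18_vec0, stmt18_vec1, stmt18_vec2, stmt18_vec3, stmt18_vec4, stmt18_vec5, stmt18_vec6]
  module

lemma stmt18_r7 (q : ℂ) :
    stmt18K1 q * stmt18x2m q * stmt18D1 q = (q ^ 3) • stmt18x2m q := by
  unfold stmt18K1 stmt18D1 stmt18x2m
  simp [stmt18_e_mul, stmt18_diag_mul_e, stmt18_e_mul_diag, mul_add, add_mul, smul_add, smul_sub, sub_smul, smul_smul, smul_mul_assoc, mul_smul_comm, -Matrix.smul_single, stmt18_vec0, stmt18_vec1, stmt18_vec2, stmt18_vec3, stmt18_vec4, stmt18_vec5, stmt18_vec6]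
  module

lemma stmt18_r8 (q : ℂ) :
    stmt18K2 q * stmt18x1p * stmt18D2 q = (q ^ 3)⁻¹ • stmt18x1p := by
  unfold stmt18K2 stmt18D2 stmt18x1p
  simp [stmt18_e_mul, stmt18_diag_mul_e, stmt18_e_mul_diag, mul_add, add_mul, smul_add, smul_sub, sub_smul, smul_smul, smul_mul_assoc, mul_smul_comm, -Matrix.smul_single, stmt18_vec0, stmt18_vec1, stmt18_vec2, stmt18_vec3, stmt18_vec4, stmt18_vec5, stmt18_vec6]
  module

lemma stmt18_r9 (q : ℂ) :
    stmt18K2 q * stmt18x1m * stmt18D2 q = (q ^ 3) • stmt18x1m := by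
  unfold stmt18K2 stmt18D2 stmt18x1m
  simp [stmt18_e_mul, stmt18_diag_mul_e, stmt18_e_mul_diag, mul_add, add_mul, smul_add, smul_sub, sub_smul, smul_smul, smul_mul_assoc, mul_smul_comm, -Matrix.smul_single, stmt18_vec0, stmt18_vec1, stmt18_vec2, stmt18_vec3, stmt18_vec4, stmt18_vec5, stmt18_vec6]
  module

lemma stmt18_r10 (q : ℂ) :
    stmt18K2 q * stmt18x2p q * stmt18D2 q = (q ^ 2) • stmt18x2p q := by
  unfold stmt18K2 stmt18D2 stmt18x2p
  simp [stmt18_e_mul, stmt18_diag_mul_e, stmt18_e_mul_diag, mul_add, add_mul, smul_add, smul_sub, sub_smul, smul_smul, smul_mul_assoc, mul_smul_comm, -Matrix.smul_single, stmt18_vec0, stmt18_vec1, stmt18_vec2, stmt18_vec3, stmt18_vec4, stmt18_vec5, stmt18_vec6]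
  module

lemma stmt18_r11 (q : ℂ) :
    stmt18K2 q * stmt18x2m q * stmt18D2 q = (q ^ 2)⁻¹ • stmt18x2m q := by
  unfold stmt18K2 stmt18D2 stmt18x2m
  simp [stmt18_e_mul, stmt18_diag_mul_e, stmt18_e_mul_diag, mul_add, add_mul, smul_add, smul_sub, sub_smul, smul_smul, smul_mul_assoc, mul_smul_comm, -Matrix.smul_single, stmt18_vec0, stmt18_vec1, stmt18_vec2, stmt18_vec3, stmt18_vec4, stmt18_vec5, stmt18_vec6]
  module

-- commutation of opposite-sign generators
lemma stmt18_r12 (q : ℂ) : stmt18x1p * stmt18x2m q = stmt18x2m q * stmt18x1p := by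
  unfold stmt18x1p stmt18x2m
  simp [stmt18_e_mul, stmt18_diag_mul_e, stmt18_e_mul_diag, mul_add, add_mul, smul_add, smul_sub, sub_smul, smul_smul, smul_mul_assoc, mul_smul_comm, -Matrix.smul_single, stmt18_vec0, stmt18_vec1, stmt18_vec2, stmt18_vec3, stmt18_vec4, stmt18_vec5, stmt18_vec6]

lemma stmt18_r13 (q : ℂ) : stmt18x2p q * stmt18x1m = stmt18x1m * stmt18x2p q := by
  unfold stmt18x1m stmt18x2p
  simp [stmt18_e_mul, stmt18_diag_mul_e, stmt18_e_mul_diag, mul_add, add_mul, smul_add, smul_sub, sub_smul, smul_smul, smul_mul_assoc, mul_smul_comm, -Matrix.smul_single, stmt18_vec0, stmt18_vec1, stmt18_vec2, stmt18_vec3, stmt18_vec4, stmt18_vec5, stmt18_vec6]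

-- commutator relations
lemma stmt18_r14 (q : ℂ) :
    (q ^ 3 - (q ^ 3)⁻¹) • (stmt18x1p * stmt18x1m - stmt18x1m * stmt18x1p)
      = stmt18K1 q - stmt18D1 q := by
  unfold stmt18K1 stmt18D1 stmt18x1p stmt18x1m
  rw [stmt18_diag_to_e, stmt18_diag_to_e]
  simp [stmt18_e_mul, stmt18_diag_mul_e, stmt18_e_mul_diag, mul_add, add_mul, smul_add, smul_sub, sub_smul, smul_smul, smul_mul_assoc, mul_smul_comm, -Matrix.smul_single, stmt18_vec0, stmt18_vec1, stmt18_vec2, stmt18_vec3, stmt18_vec4, stmt18_vec5, stmt18_vec6]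
  module

lemma stmt18_r15 (q : ℂ) :
    (q - q⁻¹) • (stmt18x2p q * stmt18x2m q - stmt18x2m q * stmt18x2p q)
      = stmt18K2 q - stmt18D2 q := by
  unfold stmt18K2 stmt18D2 stmt18x2p stmt18x2m
  rw [stmt18_diag_to_e, stmt18_diag_to_e]
  simp [stmt18_e_mul, stmt18_diag_mul_e, stmt18_e_mul_diag, mul_add, add_mul, smul_add, smul_sub, sub_smul, smul_smul, smul_mul_assoc, mul_smul_comm, -Matrix.smul_single, stmt18_vec0, stmt18_vec1, stmt18_vec2, stmt18_vec3, stmt18_vec4, stmt18_vec5, stmt18_vec6]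
  module

-- Serre relations, degree 2 in X1
lemma stmt18_r16 (q : ℂ) :
    stmt18x1p ^ 2 * stmt18x2p q - (q ^ 3 + (q ^ 3)⁻¹) • (stmt18x1p * stmt18x2p q * stmt18x1p)
      + stmt18x2p q * stmt18x1p ^ 2 = 0 := by
  have h2 : stmt18x1p ^ 2 = 0 := by
    rw [pow_two]; unfold stmt18x1p; simp [stmt18_e_mul, stmt18_diag_mul_e, stmt18_e_mul_diag, mul_add, add_mul, smul_add, smul_sub, sub_smul, smul_smul, smul_mul_assoc, mul_smul_comm, -Matrix.smul_single, stmt18_vec0, stmt18_vec1, stmt18_vec2, stmt18_vec3, stmt18_vec4, stmt18_vec5, stmt18_vec6]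
  rw [h2]
  unfold stmt18x1p stmt18x2p
  simp [stmt18_e_mul, stmt18_diag_mul_e, stmt18_e_mul_diag, mul_add, add_mul, smul_add, smul_sub, sub_smul, smul_smul, smul_mul_assoc, mul_smul_comm, -Matrix.smul_single, stmt18_vec0, stmt18_vec1, stmt18_vec2, stmt18_vec3, stmt18_vec4, stmt18_vec5, stmt18_vec6]

lemma stmt18_r17 (q : ℂ) :
    stmt18x1m ^ 2 * stmt18x2m q - (q ^ 3 + (q ^ 3)⁻¹) • (stmt18x1m * stmt18x2m q * stmt18x1m)
      + stmt18x2m q * stmt18x1m ^ 2 = 0 := by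
  have h2 : stmt18x1m ^ 2 = 0 := by
    rw [pow_two]; unfold stmt18x1m; simp [stmt18_e_mul, stmt18_diag_mul_e, stmt18_e_mul_diag, mul_add, add_mul, smul_add, smul_sub, sub_smul, smul_smul, smul_mul_assoc, mul_smul_comm, -Matrix.smul_single, stmt18_vec0, stmt18_vec1, stmt18_vec2, stmt18_vec3, stmt18_vec4, stmt18_vec5, stmt18_vec6]
  rw [h2]
  unfold stmt18x1m stmt18x2m
  simp [stmt18_e_mul, stmt18_diag_mul_e, stmt18_e_mul_diag, mul_add, add_mul, smul_add, smul_sub, sub_smul, smul_smul, smul_mul_assoc, mul_smul_comm, -Matrix.smul_single, stmt18_vec0, stmt18_vec1, stmt18_vec2, stmt18_vec3, stmt18_vec4, stmt18_vec5, stmt18_vec6]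

-- Serre relations, degree 4 in X2
lemma stmt18_r18 (q : ℂ) :
    stmt18x2p q ^ 4 * stmt18x1p
        - (q ^ 3 + q + q⁻¹ + (q ^ 3)⁻¹) • (stmt18x2p q ^ 3 * stmt18x1p * stmt18x2p q)
        + (q ^ 4 + q ^ 2 + 2 + (q ^ 2)⁻¹ + (q ^ 4)⁻¹) • (stmt18x2p q ^ 2 * stmt18x1p * stmt18x2p q ^ 2)
        - (q ^ 3 + q + q⁻¹ + (q ^ 3)⁻¹) • (stmt18x2p q * stmt18x1p * stmt18x2p q ^ 3)
        + stmt18x1p * stmt18x2p q ^ 4 = 0 := by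
  have h2 : stmt18x2p q ^ 2 = (q + q⁻¹) • Matrix.single 2 4 1 := by
    rw [pow_two]; unfold stmt18x2p; simp [stmt18_e_mul, stmt18_diag_mul_e, stmt18_e_mul_diag, mul_add, add_mul, smul_add, smul_sub, sub_smul, smul_smul, smul_mul_assoc, mul_smul_comm, -Matrix.smul_single, stmt18_vec0, stmt18_vec1, stmt18_vec2, stmt18_vec3, stmt18_vec4, stmt18_vec5, stmt18_vec6]
  have h3 : stmt18x2p q ^ 3 = 0 := by
    rw [(pow_succ (stmt18x2p q) 2 : stmt18x2p q ^ 3 = stmt18x2p q ^ 2 * stmt18x2p q), h2]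
    unfold stmt18x2p; simp [stmt18_e_mul, stmt18_diag_mul_e, stmt18_e_mul_diag, mul_add, add_mul, smul_add, smul_sub, sub_smul, smul_smul, smul_mul_assoc, mul_smul_comm, -Matrix.smul_single, stmt18_vec0, stmt18_vec1, stmt18_vec2, stmt18_vec3, stmt18_vec4, stmt18_vec5, stmt18_vec6]
  have h4 : stmt18x2p q ^ 4 = 0 := by
    rw [(pow_succ (stmt18x2p q) 3 : stmt18x2p q ^ 4 = stmt18x2p q ^ 3 * stmt18x2p q), h3,
      zero_mul]
  rw [h4, h3, h2]
  unfold stmt18x1p stmt18x2p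
  simp [stmt18_e_mul, stmt18_diag_mul_e, stmt18_e_mul_diag, mul_add, add_mul, smul_add, smul_sub, sub_smul, smul_smul, smul_mul_assoc, mul_smul_comm, -Matrix.smul_single, stmt18_vec0, stmt18_vec1, stmt18_vec2, stmt18_vec3, stmt18_vec4, stmt18_vec5, stmt18_vec6]

lemma stmt18_r19 (q : ℂ) :
    stmt18x2m q ^ 4 * stmt18x1m
        - (q ^ 3 + q + q⁻¹ + (q ^ 3)⁻¹) • (stmt18x2m q ^ 3 * stmt18x1m * stmt18x2m q)
        + (q ^ 4 + q ^ 2 + 2 + (q ^ 2)⁻¹ + (q ^ 4)⁻¹) • (stmt18x2m q ^ 2 * stmt18x1m * stmt18x2m q ^ 2)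
        - (q ^ 3 + q + q⁻¹ + (q ^ 3)⁻¹) • (stmt18x2m q * stmt18x1m * stmt18x2m q ^ 3)
        + stmt18x1m * stmt18x2m q ^ 4 = 0 := by
  have h2 : stmt18x2m q ^ 2 = (q + q⁻¹) • Matrix.single 4 2 1 := by
    rw [pow_two]; unfold stmt18x2m; simp [stmt18_e_mul, stmt18_diag_mul_e, stmt18_e_mul_diag, mul_add, add_mul, smul_add, smul_sub, sub_smul, smul_smul, smul_mul_assoc, mul_smul_comm, -Matrix.smul_single, stmt18_vec0, stmt18_vec1, stmt18_vec2, stmt18_vec3, stmt18_vec4, stmt18_vec5, stmt18_vec6]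
  have h3 : stmt18x2m q ^ 3 = 0 := by
    rw [(pow_succ (stmt18x2m q) 2 : stmt18x2m q ^ 3 = stmt18x2m q ^ 2 * stmt18x2m q), h2]
    unfold stmt18x2m; simp [stmt18_e_mul, stmt18_diag_mul_e, stmt18_e_mul_diag, mul_add, add_mul, smul_add, smul_sub, sub_smul, smul_smul, smul_mul_assoc, mul_smul_comm, -Matrix.smul_single, stmt18_vec0, stmt18_vec1, stmt18_vec2, stmt18_vec3, stmt18_vec4, stmt18_vec5, stmt18_vec6]
  have h4 : stmt18x2m q ^ 4 = 0 := by
    rw [(pow_succ (stmt18x2m q) 3 : stmt18x2m q ^ 4 = stmt18x2m q ^ 3 * stmt18x2m q), h3,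
      zero_mul]
  rw [h4, h3, h2]
  unfold stmt18x1m stmt18x2m
  simp [stmt18_e_mul, stmt18_diag_mul_e, stmt18_e_mul_diag, mul_add, add_mul, smul_add, smul_sub, sub_smul, smul_smul, smul_mul_assoc, mul_smul_comm, -Matrix.smul_single, stmt18_vec0, stmt18_vec1, stmt18_vec2, stmt18_vec3, stmt18_vec4, stmt18_vec5, stmt18_vec6]

end Stmt18Aux

/-- the explicit `7×7` matrices of the `7`-dimensional representation satisfy
the defining relations of the quantized universal enveloping algebra `U_q(g₂)`
(with `a₁₂ = −1`, `a₂₁ = −3`, `q₁ = q³`, `q₂ = q`), in denominator-free form. -/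
theorem stmt18 (q : ℂ) (hq : q ≠ 0) :
    letI E : Fin 7 → Fin 7 → Matrix (Fin 7) (Fin 7) ℂ :=
      fun a b => Matrix.single a b 1
    letI K₁ : Matrix (Fin 7) (Fin 7) ℂ :=
      Matrix.diagonal ![1, q ^ 3, (q ^ 3)⁻¹, 1, q ^ 3, (q ^ 3)⁻¹, 1]
    letI K₂ : Matrix (Fin 7) (Fin 7) ℂ :=
      Matrix.diagonal ![q, q⁻¹, q ^ 2, 1, (q ^ 2)⁻¹, q, q⁻¹]
    letI X₁p : Matrix (Fin 7) (Fin 7) ℂ := E 1 2 + E 4 5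
    letI X₁m : Matrix (Fin 7) (Fin 7) ℂ := E 2 1 + E 5 4
    letI X₂p : Matrix (Fin 7) (Fin 7) ℂ :=
      E 0 1 + (q + q⁻¹) • E 2 3 + E 3 4 + E 5 6
    letI X₂m : Matrix (Fin 7) (Fin 7) ℂ :=
      E 1 0 + E 3 2 + (q + q⁻¹) • E 4 3 + E 6 5
    K₁ * K₂ = K₂ * K₁
    ∧ IsUnit K₁ ∧ IsUnit K₂
    ∧ K₁ * X₁p * K₁⁻¹ = (q ^ 6) • X₁p
    ∧ K₁ * X₁m * K₁⁻¹ = (q ^ 6)⁻¹ • X₁m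
    ∧ K₁ * X₂p * K₁⁻¹ = (q ^ 3)⁻¹ • X₂p
    ∧ K₁ * X₂m * K₁⁻¹ = (q ^ 3) • X₂m
    ∧ K₂ * X₁p * K₂⁻¹ = (q ^ 3)⁻¹ • X₁p
    ∧ K₂ * X₁m * K₂⁻¹ = (q ^ 3) • X₁m
    ∧ K₂ * X₂p * K₂⁻¹ = (q ^ 2) • X₂p
    ∧ K₂ * X₂m * K₂⁻¹ = (q ^ 2)⁻¹ • X₂m
    ∧ X₁p * X₂m = X₂m * X₁p
    ∧ X₂p * X₁m = X₁m * X₂p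
    ∧ (q ^ 3 - (q ^ 3)⁻¹) • (X₁p * X₁m - X₁m * X₁p) = K₁ - K₁⁻¹
    ∧ (q - q⁻¹) • (X₂p * X₂m - X₂m * X₂p) = K₂ - K₂⁻¹
    ∧ X₁p ^ 2 * X₂p - (q ^ 3 + (q ^ 3)⁻¹) • (X₁p * X₂p * X₁p) + X₂p * X₁p ^ 2 = 0
    ∧ X₁m ^ 2 * X₂m - (q ^ 3 + (q ^ 3)⁻¹) • (X₁m * X₂m * X₁m) + X₂m * X₁m ^ 2 = 0
    ∧ X₂p ^ 4 * X₁p - (q ^ 3 + q + q⁻¹ + (q ^ 3)⁻¹) • (X₂p ^ 3 * X₁p * X₂p)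
        + (q ^ 4 + q ^ 2 + 2 + (q ^ 2)⁻¹ + (q ^ 4)⁻¹) • (X₂p ^ 2 * X₁p * X₂p ^ 2)
        - (q ^ 3 + q + q⁻¹ + (q ^ 3)⁻¹) • (X₂p * X₁p * X₂p ^ 3) + X₁p * X₂p ^ 4 = 0
    ∧ X₂m ^ 4 * X₁m - (q ^ 3 + q + q⁻¹ + (q ^ 3)⁻¹) • (X₂m ^ 3 * X₁m * X₂m)
        + (q ^ 4 + q ^ 2 + 2 + (q ^ 2)⁻¹ + (q ^ 4)⁻¹) • (X₂m ^ 2 * X₁m * X₂m ^ 2)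
        - (q ^ 3 + q + q⁻¹ + (q ^ 3)⁻¹) • (X₂m * X₁m * X₂m ^ 3) + X₁m * X₂m ^ 4 = 0 := by
  refine ⟨?_, ?_, ?_, ?_, ?_, ?_, ?_, ?_, ?_, ?_, ?_, ?_, ?_, ?_, ?_, ?_, ?_, ?_, ?_⟩
  · exact stmt18_r1 q
  · exact (Matrix.isUnit_iff_isUnit_det _).2 (Matrix.isUnit_det_of_right_inverse (stmt18_inv1mul q hq))
  · exact (Matrix.isUnit_iff_isUnit_det _).2 (Matrix.isUnit_det_of_right_inverse (stmt18_inv2mul q hq))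
  · rw [stmt18_inv1L q hq]; exact stmt18_r4 q
  · rw [stmt18_inv1L q hq]; exact stmt18_r5 q
  · rw [stmt18_inv1L q hq]; exact stmt18_r6 q
  · rw [stmt18_inv1L q hq]; exact stmt18_r7 q
  · rw [stmt18_inv2L q hq]; exact stmt18_r8 q
  · rw [stmt18_inv2L q hq]; exact stmt18_r9 q
  · rw [stmt18_inv2L q hq]; exact stmt18_r10 q
  · rw [stmt18_inv2L q hq]; exact stmt18_r11 q
  · exact stmt18_r12 q
  · exact stmt18_r13 q
  · rw [stmt18_inv1L q hq]; exact stmt18_r14 q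
  · rw [stmt18_inv2L q hq]; exact stmt18_r15 q
  · exact stmt18_r16 q
  · exact stmt18_r17 q
  · exact stmt18_r18 q
  · exact stmt18_r19 q
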